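/- Let I ⊂ S be a homogeneous ideal in a polynomial ring over ℂ, d ≥ 2 an integer, and h = h_I(d). Then for all 0 ≤ k ≤ d: if h ≤ d then h_I(k) ≥ min(h, k+1); if d+1 ≤ h ≤ 2d then h_I(k) ≥ min(k + (h − d), 2k + 1); and if h = 2d+1 then h_I(k) ≥ 2k + 1. -/

import Mathlib

open MvPolynomial

noncomputable def hilb (n : ℕ) (I : Ideal (MvPolynomial (Fin (n + 1)) ℂ)) (k : ℕ) : ℕ :=
  Module.finrank ℂ (Submodule.map (Ideal.Quotient.mkₐ ℂ I).toLinearMap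
    (homogeneousSubmodule (Fin (n + 1)) ℂ k))


variable {α : Type*} [DecidableEq α]

namespace ShadowAux

/-- divide-by-`a` part of a finset of multisets -/
noncomputable def dvd (a : α) (S : Finset (Multiset α)) : Finset (Multiset α) :=
  (S.filter (fun x => a ∈ x)).image (fun x => x.erase a)

lemma mem_dvd {a : α} {S : Finset (Multiset α)} {m : Multiset α} :
    m ∈ dvd a S ↔ a ::ₘ m ∈ S := by
  unfold dvd
  constructor
  · rintro h
    simp only [Finset.mem_image, Finset.mem_filter] at h
    obtain ⟨x, ⟨hxS, hax⟩, rfl⟩ := h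
    rwa [Multiset.cons_erase hax]
  · intro h
    simp only [Finset.mem_image, Finset.mem_filter]
    exact ⟨a ::ₘ m, ⟨h, Multiset.mem_cons_self _ _⟩, by rw [Multiset.erase_cons_head]⟩

lemma card_dvd (a : α) (S : Finset (Multiset α)) :
    (dvd a S).card = (S.filter (fun x => a ∈ x)).card := by
  apply Finset.card_image_of_injOn
  intro x hx y hy hxy
  simp only [Finset.coe_filter, Set.mem_setOf_eq] at hx hy
  have h2 := congrArg (fun s => a ::ₘ s) hxy
  simpa [Multiset.cons_erase hx.2, Multiset.cons_erase hy.2] using h2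

lemma card_split (a : α) (S : Finset (Multiset α)) :
    S.card = (S.filter (fun x => a ∉ x)).card + (dvd a S).card := by
  rw [card_dvd]
  rw [add_comm]
  exact (Finset.card_filter_add_card_filter_not (fun x => a ∈ x)).symm

lemma erase_cons_mem {a b : α} {m : Multiset α} (hb : b ∈ m) :
    (a ::ₘ m).erase b = a ::ₘ m.erase b := by
  by_cases hba : b = a
  · subst hba
    rw [Multiset.erase_cons_head, Multiset.cons_erase hb]
  · exact Multiset.erase_cons_tail _ (fun h => hba h.symm)

/-- Baby Macaulay, case `|S| ≤ k`: the next slice is no bigger. -/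
lemma L1 : ∀ (M : ℕ) (k : ℕ) (V : Finset α) (S T : Finset (Multiset α)),
    V.card + k ≤ M →
    (∀ m ∈ T, Multiset.card m = k + 1) →
    (∀ m ∈ T, ∀ b ∈ m, m.erase b ∈ S) →
    (∀ m ∈ T, ∀ b ∈ m, b ∈ V) →
    S.card ≤ k → T.card ≤ S.card := by
  intro M
  induction M with
  | zero =>
    intro k V S T hM hTc hSh hTV hS
    -- k = 0 and V empty: T must be empty
    have hk0 : k = 0 := by omega
    subst hk0
    · -- S.card ≤ 0
      have hS0 : S = ∅ := Finset.card_eq_zero.mp (Nat.le_zero.mp hS)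
      have : T = ∅ := by
        rw [Finset.eq_empty_iff_forall_notMem]
        intro m hm
        have hc := hTc m hm
        have : ∃ b, b ∈ m := Multiset.exists_mem_of_ne_zero (by
          intro h; rw [h] at hc; simp at hc)
        obtain ⟨b, hb⟩ := this
        have := hSh m hm b hb
        rw [hS0] at this
        exact absurd this (Finset.notMem_empty _)
      simp [this]
  | succ M ih =>
    intro k V S T hM hTc hSh hTV hS
    -- if T is empty, done
    rcases Finset.eq_empty_or_nonempty T with rfl | ⟨m0, hm0⟩
    · simp
    -- T nonempty; k = 0 impossible unless S nonempty... handle k = 0 separately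
    rcases Nat.eq_zero_or_pos k with rfl | hk
    · -- S.card = 0, T must be empty: contradiction
      have hS0 : S = ∅ := Finset.card_eq_zero.mp (Nat.le_zero.mp hS)
      have hc := hTc m0 hm0
      obtain ⟨b, hb⟩ := Multiset.exists_mem_of_ne_zero (by
        intro h; rw [h] at hc; simp at hc : m0 ≠ 0)
      have := hSh m0 hm0 b hb
      rw [hS0] at this
      exact absurd this (Finset.notMem_empty _)
    -- V nonempty (T nonempty has elements with members in V)
    have hc0 := hTc m0 hm0
    obtain ⟨b0, hb0⟩ := Multiset.exists_mem_of_ne_zero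
      (by intro h; rw [h] at hc0; simp at hc0 : m0 ≠ 0)
    have haV : b0 ∈ V := hTV m0 hm0 b0 hb0
    set a := b0 with ha_def
    -- decompositions
    set SA := S.filter (fun x => a ∉ x) with hSA
    set TA := T.filter (fun x => a ∉ x) with hTA
    set SB := dvd a S with hSB
    set TB := dvd a T with hTB
    have hScard : S.card = SA.card + SB.card := card_split a S
    have hTcard : T.card = TA.card + TB.card := card_split a T
    -- TB facts
    have hTBc : ∀ m ∈ TB, Multiset.card m = (k - 1) + 1 := by
      intro m hm
      rw [hTB, mem_dvd] at hm
      have := hTc _ hm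
      rw [Multiset.card_cons] at this
      omega
    have hTBsh : ∀ m ∈ TB, ∀ b ∈ m, m.erase b ∈ SB := by
      intro m hm b hb
      rw [hTB, mem_dvd] at hm
      have h1 : (a ::ₘ m).erase b ∈ S := hSh _ hm b (Multiset.mem_cons_of_mem hb)
      rw [erase_cons_mem hb] at h1
      rw [hSB, mem_dvd]
      exact h1
    have hTBV : ∀ m ∈ TB, ∀ b ∈ m, b ∈ V := by
      intro m hm b hb
      rw [hTB, mem_dvd] at hm
      exact hTV _ hm b (Multiset.mem_cons_of_mem hb)
    have hTBsubS : TB ⊆ S := by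
      intro m hm
      rw [hTB, mem_dvd] at hm
      have := hSh _ hm a (Multiset.mem_cons_self _ _)
      rwa [Multiset.erase_cons_head] at this
    -- TA facts
    have hTAc : ∀ m ∈ TA, Multiset.card m = k + 1 := by
      intro m hm; exact hTc m (Finset.mem_filter.mp hm).1
    have hTAsh : ∀ m ∈ TA, ∀ b ∈ m, m.erase b ∈ SA := by
      intro m hm b hb
      rw [hTA, Finset.mem_filter] at hm
      rw [hSA, Finset.mem_filter]
      refine ⟨hSh m hm.1 b hb, fun h => hm.2 (Multiset.mem_of_mem_erase h)⟩
    have hTAV : ∀ m ∈ TA, ∀ b ∈ m, b ∈ V.erase a := by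
      intro m hm b hb
      rw [hTA, Finset.mem_filter] at hm
      refine Finset.mem_erase.mpr ⟨?_, hTV m hm.1 b hb⟩
      rintro rfl; exact hm.2 hb
    have hVe : (V.erase a).card + k ≤ M := by
      have h1 := Finset.card_erase_of_mem haV
      have h2 : 0 < V.card := Finset.card_pos.mpr ⟨a, haV⟩
      omega
    -- case on SA empty or not
    rcases Finset.eq_empty_or_nonempty SA with hSAe | hSAne
    · -- TA empty, T.card = TB.card ≤ S.card
      have hTAe : TA = ∅ := by
        rw [Finset.eq_empty_iff_forall_notMem]
        intro m hm
        have hc := hTAc m hm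
        obtain ⟨b, hb⟩ := Multiset.exists_mem_of_ne_zero
          (by intro h; rw [h] at hc; simp at hc : m ≠ 0)
        have := hTAsh m hm b hb
        rw [hSAe] at this
        exact absurd this (Finset.notMem_empty _)
      have : T.card = TB.card := by rw [hTcard, hTAe]; simp
      rw [this]
      exact le_trans (Finset.card_le_card hTBsubS) le_rfl
    · -- SA nonempty: SB.card ≤ k - 1
      have hSBle : SB.card ≤ k - 1 := by
        have h1 : 1 ≤ SA.card := Finset.Nonempty.card_pos hSAne
        omega
      have hTBle : TB.card ≤ SB.card :=
        ih (k - 1) V SB TB (by omega) hTBc hTBsh hTBV hSBle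
      have hSAle : SA.card ≤ k := by
        have : SA ⊆ S := Finset.filter_subset _ _
        exact le_trans (Finset.card_le_card this) hS
      have hTAle : TA.card ≤ SA.card :=
        ih k (V.erase a) SA TA hVe hTAc hTAsh hTAV hSAle
      omega

/-- Baby Macaulay, case `k ≤ |S| ≤ 2k`: the next slice grows by at most 1. -/
lemma L2 : ∀ (M : ℕ) (k : ℕ) (V : Finset α) (S T : Finset (Multiset α)),
    V.card + k ≤ M → 1 ≤ k →
    (∀ m ∈ T, Multiset.card m = k + 1) →
    (∀ m ∈ T, ∀ b ∈ m, m.erase b ∈ S) →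
    (∀ m ∈ T, ∀ b ∈ m, b ∈ V) →
    S.card ≤ 2 * k → T.card ≤ S.card + 1 := by
  intro M
  induction M with
  | zero => intro k V S T hM hk; omega
  | succ M ih =>
    intro k V S T hM hk hTc hSh hTV hS
    rcases Finset.eq_empty_or_nonempty T with rfl | ⟨m0, hm0⟩
    · simp
    have hc0 := hTc m0 hm0
    obtain ⟨b0, hb0⟩ := Multiset.exists_mem_of_ne_zero
      (by intro h; rw [h] at hc0; simp at hc0 : m0 ≠ 0)
    have haV : b0 ∈ V := hTV m0 hm0 b0 hb0
    set a := b0 with ha_def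
    set SA := S.filter (fun x => a ∉ x) with hSA
    set TA := T.filter (fun x => a ∉ x) with hTA
    set SB := dvd a S with hSB
    set TB := dvd a T with hTB
    have hScard : S.card = SA.card + SB.card := card_split a S
    have hTcard : T.card = TA.card + TB.card := card_split a T
    have hTBc : ∀ m ∈ TB, Multiset.card m = (k - 1) + 1 := by
      intro m hm
      rw [hTB, mem_dvd] at hm
      have := hTc _ hm
      rw [Multiset.card_cons] at this
      omega
    have hTBsh : ∀ m ∈ TB, ∀ b ∈ m, m.erase b ∈ SB := by
      intro m hm b hb
      rw [hTB, mem_dvd] at hm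
      have h1 : (a ::ₘ m).erase b ∈ S := hSh _ hm b (Multiset.mem_cons_of_mem hb)
      rw [erase_cons_mem hb] at h1
      rw [hSB, mem_dvd]
      exact h1
    have hTBV : ∀ m ∈ TB, ∀ b ∈ m, b ∈ V := by
      intro m hm b hb
      rw [hTB, mem_dvd] at hm
      exact hTV _ hm b (Multiset.mem_cons_of_mem hb)
    have hTBsubS : TB ⊆ S := by
      intro m hm
      rw [hTB, mem_dvd] at hm
      have := hSh _ hm a (Multiset.mem_cons_self _ _)
      rwa [Multiset.erase_cons_head] at this
    have hTAc : ∀ m ∈ TA, Multiset.card m = k + 1 := by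
      intro m hm; exact hTc m (Finset.mem_filter.mp hm).1
    have hTAsh : ∀ m ∈ TA, ∀ b ∈ m, m.erase b ∈ SA := by
      intro m hm b hb
      rw [hTA, Finset.mem_filter] at hm
      rw [hSA, Finset.mem_filter]
      refine ⟨hSh m hm.1 b hb, fun h => hm.2 (Multiset.mem_of_mem_erase h)⟩
    have hTAV : ∀ m ∈ TA, ∀ b ∈ m, b ∈ V.erase a := by
      intro m hm b hb
      rw [hTA, Finset.mem_filter] at hm
      refine Finset.mem_erase.mpr ⟨?_, hTV m hm.1 b hb⟩
      rintro rfl; exact hm.2 hb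
    have hVe : (V.erase a).card + k ≤ M := by
      have h1 := Finset.card_erase_of_mem haV
      have h2 : 0 < V.card := Finset.card_pos.mpr ⟨a, haV⟩
      omega
    have hSAsubS : SA.card ≤ S.card := Finset.card_le_card (Finset.filter_subset _ _)
    by_cases hSA1 : SA.card ≤ 1
    · -- TA ≤ SA via L1, TB ⊆ S
      have hTAle : TA.card ≤ SA.card :=
        L1 M k (V.erase a) SA TA hVe hTAc hTAsh hTAV (by omega)
      have hTBle : TB.card ≤ S.card := Finset.card_le_card hTBsubS
      omega
    · push_neg at hSA1
      by_cases hSAk : SA.card ≤ k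
      · -- k ≥ 2 here
        have hk2 : 2 ≤ k := by omega
        have hTAle : TA.card ≤ SA.card :=
          L1 M k (V.erase a) SA TA hVe hTAc hTAsh hTAV hSAk
        have hTBle : TB.card ≤ SB.card + 1 :=
          ih (k - 1) V SB TB (by omega) (by omega) hTBc hTBsh hTBV (by omega)
        omega
      · push_neg at hSAk
        have hTBle : TB.card ≤ SB.card :=
          L1 M (k - 1) V SB TB (by omega) hTBc hTBsh hTBV (by omega)
        have hTAle : TA.card ≤ SA.card + 1 :=
          ih k (V.erase a) SA TA hVe hk hTAc hTAsh hTAV (by omega)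
        omega

end ShadowAux


open MvPolynomial

namespace HilbAux

variable {n : ℕ} (I : Ideal (MvPolynomial (Fin (n + 1)) ℂ))

/-- `d` is the leading (lex-maximal) monomial of some nonzero homogeneous element
of `I` of degree `k`. -/
def IsLM (k : ℕ) (d : Fin (n + 1) →₀ ℕ) : Prop :=
  ∃ f : MvPolynomial (Fin (n + 1)) ℂ, f ∈ I ∧ f.IsHomogeneous k ∧ coeff d f ≠ 0 ∧
    ∀ e ∈ f.support, toLex e ≤ toLex d

/-- The degree-`k` standard monomials (not leading monomials of `I`). -/
def NkSet (k : ℕ) : Set (Fin (n + 1) →₀ ℕ) :=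
  {d | Finsupp.degree d = k ∧ ¬ IsLM I k d}

lemma degree_eq_card (d : Fin (n + 1) →₀ ℕ) :
    Finsupp.degree d = Multiset.card (Finsupp.toMultiset d) := by
  rw [Finsupp.card_toMultiset]
  rfl

lemma finite_degree_eq (k : ℕ) :
    {d : Fin (n + 1) →₀ ℕ | Finsupp.degree d = k}.Finite := by
  have h1 : {m : Multiset (Fin (n + 1)) | Multiset.card m = k}.Finite := by
    have : {m : Multiset (Fin (n + 1)) | Multiset.card m = k} =
        Set.range (fun s : Sym (Fin (n + 1)) k => (s : Multiset (Fin (n + 1)))) := by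
      ext m
      constructor
      · intro hm; exact ⟨⟨m, hm⟩, rfl⟩
      · rintro ⟨s, rfl⟩; exact s.2
    rw [this]
    exact Set.finite_range _
  have h2 : {d : Fin (n + 1) →₀ ℕ | Finsupp.degree d = k} =
      Finsupp.toMultiset ⁻¹' {m | Multiset.card m = k} := by
    ext d
    simp [Set.mem_preimage, degree_eq_card]
  rw [h2]
  apply Set.Finite.preimage _ h1
  intro x _ y _ hxy
  have := congrArg Multiset.toFinsupp hxy
  simpa [Multiset.toFinsupp_toMultiset] using this

lemma finite_NkSet (k : ℕ) : (NkSet I k).Finite :=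
  (finite_degree_eq k).subset (fun d hd => hd.1)

/-- The finset of degree-`k` standard monomials. -/
noncomputable def Nk (k : ℕ) : Finset (Fin (n + 1) →₀ ℕ) :=
  (finite_NkSet I k).toFinset

lemma mem_Nk {k : ℕ} {d : Fin (n + 1) →₀ ℕ} :
    d ∈ Nk I k ↔ Finsupp.degree d = k ∧ ¬ IsLM I k d :=
  Set.Finite.mem_toFinset _

lemma isLM_mul_X {k : ℕ} {d : Fin (n + 1) →₀ ℕ} (h : IsLM I k d) (b : Fin (n + 1)) :
    IsLM I (k + 1) (Finsupp.single b 1 + d) := by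
  obtain ⟨f, hfI, hfhom, hfc, hfmax⟩ := h
  refine ⟨X b * f, I.mul_mem_left _ hfI, ?_, ?_, ?_⟩
  · have h1 := (isHomogeneous_X ℂ b).mul hfhom
    rwa [add_comm 1 k] at h1
  · rwa [coeff_X_mul]
  · intro e he
    rw [support_X_mul, Finset.mem_map] at he
    obtain ⟨e', he', rfl⟩ := he
    have h1 : toLex e' ≤ toLex d := hfmax e' he'
    exact add_le_add_right h1 (toLex (Finsupp.single b 1))

lemma single_add_sub {b : Fin (n + 1)} {d : Fin (n + 1) →₀ ℕ} (h : d b ≠ 0) :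
    Finsupp.single b 1 + (d - Finsupp.single b 1) = d := by
  ext i
  rw [Finsupp.add_apply, Finsupp.tsub_apply, Finsupp.single_apply]
  split_ifs with h1
  · subst h1; omega
  · omega

lemma sub_single_mem_Nk {k : ℕ} {d : Fin (n + 1) →₀ ℕ} (hd : d ∈ Nk I (k + 1))
    {b : Fin (n + 1)} (hb : d b ≠ 0) : d - Finsupp.single b 1 ∈ Nk I k := by
  rw [mem_Nk] at hd ⊢
  set q := d - Finsupp.single b 1 with hq
  have hdq : Finsupp.single b 1 + q = d := single_add_sub hb
  constructor
  · have h1 : Finsupp.degree d = Finsupp.degree q + 1 := by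
      rw [← hdq, degree_eq_card, degree_eq_card, map_add]
      simp [Finsupp.toMultiset_single]
    omega
  · intro hLM
    have := isLM_mul_X I hLM b
    rw [hdq] at this
    exact hd.2 this

lemma toMultiset_mem_image_Nk {k : ℕ} {m : Multiset (Fin (n + 1))} :
    m ∈ (Nk I k).image Finsupp.toMultiset ↔ ∃ d ∈ Nk I k, Finsupp.toMultiset d = m := by
  simp [Finset.mem_image]

lemma card_image_Nk (k : ℕ) :
    ((Nk I k).image Finsupp.toMultiset).card = (Nk I k).card := by
  apply Finset.card_image_of_injective
  intro x y hxy
  have := congrArg Multiset.toFinsupp hxy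
  simpa [Multiset.toFinsupp_toMultiset] using this

lemma shadow_hyps (k : ℕ) :
    (∀ m ∈ (Nk I (k+1)).image Finsupp.toMultiset, Multiset.card m = k + 1) ∧
    (∀ m ∈ (Nk I (k+1)).image Finsupp.toMultiset, ∀ b ∈ m,
      m.erase b ∈ (Nk I k).image Finsupp.toMultiset) := by
  constructor
  · intro m hm
    obtain ⟨d, hd, rfl⟩ := (toMultiset_mem_image_Nk I).mp hm
    rw [← degree_eq_card]
    exact ((mem_Nk I).mp hd).1
  · intro m hm b hb
    obtain ⟨d, hd, rfl⟩ := (toMultiset_mem_image_Nk I).mp hm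
    have hbd : d b ≠ 0 := by
      rw [Finsupp.mem_toMultiset, Finsupp.mem_support_iff] at hb
      exact hb
    have hq := sub_single_mem_Nk I hd hbd
    refine Finset.mem_image.mpr ⟨d - Finsupp.single b 1, hq, ?_⟩
    have hdq : Finsupp.single b 1 + (d - Finsupp.single b 1) = d := single_add_sub hbd
    conv_rhs => rw [← hdq]
    rw [map_add, Finsupp.toMultiset_single, one_nsmul, Multiset.singleton_add,
      Multiset.erase_cons_head]

lemma card_Nk_succ_le {k : ℕ} (h : (Nk I k).card ≤ k) :
    (Nk I (k + 1)).card ≤ (Nk I k).card := by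
  obtain ⟨h1, h2⟩ := shadow_hyps I k
  have := ShadowAux.L1 ((Finset.univ : Finset (Fin (n+1))).card + k) k Finset.univ
    ((Nk I k).image Finsupp.toMultiset) ((Nk I (k+1)).image Finsupp.toMultiset)
    le_rfl h1 h2 (fun m _ b _ => Finset.mem_univ b) (by rwa [card_image_Nk])
  rwa [card_image_Nk, card_image_Nk] at this

lemma card_Nk_succ_le' {k : ℕ} (hk : 1 ≤ k) (h : (Nk I k).card ≤ 2 * k) :
    (Nk I (k + 1)).card ≤ (Nk I k).card + 1 := by
  obtain ⟨h1, h2⟩ := shadow_hyps I k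
  have := ShadowAux.L2 ((Finset.univ : Finset (Fin (n+1))).card + k) k Finset.univ
    ((Nk I k).image Finsupp.toMultiset) ((Nk I (k+1)).image Finsupp.toMultiset)
    le_rfl hk h1 h2 (fun m _ b _ => Finset.mem_univ b) (by rwa [card_image_Nk])
  rwa [card_image_Nk, card_image_Nk] at this

end HilbAux

namespace HilbAux

variable {n : ℕ} (I : Ideal (MvPolynomial (Fin (n + 1)) ℂ))

lemma mkₐ_eq_zero_iff {x : MvPolynomial (Fin (n + 1)) ℂ} :
    Ideal.Quotient.mkₐ ℂ I x = 0 ↔ x ∈ I := by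
  rw [Ideal.Quotient.mkₐ_eq_mk]
  exact Ideal.Quotient.eq_zero_iff_mem

lemma exists_lex_max (f : MvPolynomial (Fin (n + 1)) ℂ) (hf : f ≠ 0) :
    ∃ l ∈ f.support, ∀ e ∈ f.support, toLex e ≤ toLex l := by
  have hne : (f.support.image toLex).Nonempty :=
    (MvPolynomial.support_nonempty.mpr hf).image _
  obtain ⟨l, hl, hlL⟩ := Finset.mem_image.mp (Finset.max'_mem _ hne)
  refine ⟨l, hl, fun e he => ?_⟩
  rw [hlL]
  exact Finset.le_max' _ _ (Finset.mem_image_of_mem _ he)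

lemma degree_of_mem_support {f : MvPolynomial (Fin (n + 1)) ℂ} {k : ℕ}
    (hf : f.IsHomogeneous k) {e : Fin (n + 1) →₀ ℕ} (he : e ∈ f.support) :
    Finsupp.degree e = k := by
  rw [Finsupp.degree_eq_weight_one]
  exact hf (MvPolynomial.mem_support_iff.mp he)

lemma linearIndependent_Nk (k : ℕ) :
    LinearIndependent ℂ (fun d : {x // x ∈ Nk I k} =>
      Ideal.Quotient.mkₐ ℂ I (monomial d.1 1 : MvPolynomial (Fin (n + 1)) ℂ)) := by
  rw [Fintype.linearIndependent_iff]
  intro g hg i₀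
  set p : MvPolynomial (Fin (n + 1)) ℂ := ∑ i : {x // x ∈ Nk I k}, monomial i.1 (g i) with hp
  have hmkp : Ideal.Quotient.mkₐ ℂ I p = 0 := by
    rw [hp, map_sum]
    rw [← hg]
    apply Finset.sum_congr rfl
    intro i _
    have : (monomial i.1 (g i) : MvPolynomial (Fin (n + 1)) ℂ) = g i • monomial i.1 1 := by
      rw [MvPolynomial.smul_monomial, smul_eq_mul, mul_one]
    rw [this, map_smul]
  have hpI : p ∈ I := (mkₐ_eq_zero_iff I).mp hmkp
  have hcoeff : ∀ i : {x // x ∈ Nk I k}, MvPolynomial.coeff i.1 p = g i := by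
    intro i
    rw [hp, MvPolynomial.coeff_sum]
    rw [Finset.sum_eq_single i]
    · rw [MvPolynomial.coeff_monomial, if_pos rfl]
    · intro j _ hji
      rw [MvPolynomial.coeff_monomial, if_neg]
      intro hc
      exact hji (Subtype.ext hc)
    · intro h; exact absurd (Finset.mem_univ i) h
  have hsupp : ∀ e ∈ p.support, e ∈ Nk I k := by
    intro e he
    by_contra hne
    have : MvPolynomial.coeff e p = 0 := by
      rw [hp, MvPolynomial.coeff_sum]
      apply Finset.sum_eq_zero
      intro j _
      rw [MvPolynomial.coeff_monomial, if_neg]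
      rintro rfl
      exact hne j.2
    exact (MvPolynomial.mem_support_iff.mp he) this
  have hphom : p.IsHomogeneous k := by
    rw [← mem_homogeneousSubmodule]
    apply Submodule.sum_mem
    intro i _
    rw [mem_homogeneousSubmodule]
    exact isHomogeneous_monomial _ ((mem_Nk I).mp i.2).1
  have hp0 : p = 0 := by
    by_contra hp0
    obtain ⟨l, hl, hlmax⟩ := exists_lex_max p hp0
    have hlNk := hsupp l hl
    have : IsLM I k l := ⟨p, hpI, hphom, MvPolynomial.mem_support_iff.mp hl, hlmax⟩
    exact ((mem_Nk I).mp hlNk).2 this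
  have := hcoeff i₀
  rw [hp0] at this
  simpa using this.symm

lemma mk_mem_span (k : ℕ) (f : MvPolynomial (Fin (n + 1)) ℂ) (hf : f.IsHomogeneous k) :
    Ideal.Quotient.mkₐ ℂ I f ∈ Submodule.span ℂ (Set.range fun d : {x // x ∈ Nk I k} =>
      Ideal.Quotient.mkₐ ℂ I (monomial d.1 1 : MvPolynomial (Fin (n + 1)) ℂ)) := by
  set SP := Submodule.span ℂ (Set.range fun d : {x // x ∈ Nk I k} =>
      Ideal.Quotient.mkₐ ℂ I (monomial d.1 1 : MvPolynomial (Fin (n + 1)) ℂ)) with hSP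
  have hwf : WellFoundedLT (Lex (Fin (n + 1) →₀ ℕ)) := Finsupp.Lex.wellFoundedLT_of_finite
  have main : ∀ D : Lex (Fin (n + 1) →₀ ℕ), ∀ f : MvPolynomial (Fin (n + 1)) ℂ,
      f.IsHomogeneous k → (∀ e ∈ f.support, toLex e ≤ D) → Ideal.Quotient.mkₐ ℂ I f ∈ SP := by
    intro D
    induction D using hwf.wf.induction with
    | _ D IH =>
    intro f hf hbound
    by_cases hf0 : f = 0
    · rw [hf0, map_zero]; exact Submodule.zero_mem _
    have hreduce : ∀ f' : MvPolynomial (Fin (n + 1)) ℂ, f'.IsHomogeneous k →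
        (∀ e ∈ f'.support, toLex e < D) → Ideal.Quotient.mkₐ ℂ I f' ∈ SP := by
      intro f' hf' hb'
      by_cases h0 : f' = 0
      · rw [h0, map_zero]; exact Submodule.zero_mem _
      obtain ⟨l', hl', hmax'⟩ := exists_lex_max f' h0
      exact IH (toLex l') (hb' l' hl') f' hf' hmax'
    obtain ⟨l, hl, hlmax⟩ := exists_lex_max f hf0
    have hlD : toLex l ≤ D := hbound l hl
    have hlk : Finsupp.degree l = k := degree_of_mem_support hf hl
    by_cases hLM : IsLM I k l
    · obtain ⟨g, hgI, hghom, hgc, hgmax⟩ := hLM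
      set c : ℂ := MvPolynomial.coeff l f / MvPolynomial.coeff l g with hc
      set f' : MvPolynomial (Fin (n + 1)) ℂ := f - c • g with hf'def
      have hcg : c • g ∈ I := by
        rw [MvPolynomial.smul_eq_C_mul]
        exact I.mul_mem_left _ hgI
      have hmk : Ideal.Quotient.mkₐ ℂ I f = Ideal.Quotient.mkₐ ℂ I f' := by
        rw [hf'def, map_sub, (mkₐ_eq_zero_iff I).mpr hcg, sub_zero]
      have hf'hom : f'.IsHomogeneous k := by
        rw [← mem_homogeneousSubmodule] at hghom hf ⊢
        exact Submodule.sub_mem _ hf (Submodule.smul_mem _ _ hghom)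
      have hf'bound : ∀ e ∈ f'.support, toLex e < D := by
        intro e he
        have hel : e ≠ l := by
          rintro rfl
          have : MvPolynomial.coeff e f' = 0 := by
            rw [hf'def, MvPolynomial.coeff_sub, MvPolynomial.coeff_smul, smul_eq_mul, hc,
              div_mul_cancel₀ _ hgc, sub_self]
          exact (MvPolynomial.mem_support_iff.mp he) this
        have hesub : e ∈ f.support ∪ g.support := by
          have h1 := MvPolynomial.support_sub _ _ _ he
          rcases Finset.mem_union.mp h1 with h | h
          · exact Finset.mem_union_left _ h
          · exact Finset.mem_union_right _ (Finsupp.support_smul h)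
        have hele : toLex e ≤ toLex l := by
          rcases Finset.mem_union.mp hesub with h | h
          · exact hlmax e h
          · exact hgmax e h
        exact lt_of_lt_of_le (lt_of_le_of_ne hele (fun hc2 => hel (toLex.injective hc2))) hlD
      rw [hmk]
      exact hreduce f' hf'hom hf'bound
    · -- l is a standard monomial
      have hlNk : l ∈ Nk I k := (mem_Nk I).mpr ⟨hlk, hLM⟩
      set c : ℂ := MvPolynomial.coeff l f with hc
      set f' : MvPolynomial (Fin (n + 1)) ℂ := f - monomial l c with hf'def
      have hf'hom : f'.IsHomogeneous k := by
        rw [← mem_homogeneousSubmodule] at hf ⊢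
        refine Submodule.sub_mem _ hf ?_
        rw [mem_homogeneousSubmodule]
        exact isHomogeneous_monomial _ hlk
      have hf'bound : ∀ e ∈ f'.support, toLex e < D := by
        intro e he
        have hel : e ≠ l := by
          rintro rfl
          have : MvPolynomial.coeff e f' = 0 := by
            rw [hf'def, MvPolynomial.coeff_sub, MvPolynomial.coeff_monomial, if_pos rfl, hc,
              sub_self]
          exact (MvPolynomial.mem_support_iff.mp he) this
        have hesub : e ∈ f.support := by
          have h1 := MvPolynomial.support_sub _ _ _ he
          rcases Finset.mem_union.mp h1 with h | h
          · exact h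
          · exfalso
            have := MvPolynomial.support_monomial_subset h
            rw [Finset.mem_singleton] at this
            exact hel this
        have hele : toLex e ≤ toLex l := hlmax e hesub
        exact lt_of_lt_of_le (lt_of_le_of_ne hele (fun hc2 => hel (toLex.injective hc2))) hlD
      have h1 : Ideal.Quotient.mkₐ ℂ I f =
          Ideal.Quotient.mkₐ ℂ I f' + c • Ideal.Quotient.mkₐ ℂ I (monomial l 1) := by
        rw [hf'def, map_sub]
        have : (monomial l c : MvPolynomial (Fin (n + 1)) ℂ) = c • monomial l 1 := by
          rw [MvPolynomial.smul_monomial, smul_eq_mul, mul_one]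
        rw [this, map_smul]
        ring
      rw [h1]
      refine Submodule.add_mem _ (hreduce f' hf'hom hf'bound) (Submodule.smul_mem _ _ ?_)
      exact Submodule.subset_span ⟨⟨l, hlNk⟩, rfl⟩
  by_cases hf0 : f = 0
  · rw [hf0, map_zero]; exact Submodule.zero_mem _
  obtain ⟨l, hl, hlmax⟩ := exists_lex_max f hf0
  exact main (toLex l) f hf hlmax

end HilbAux

namespace HilbAux

variable {n : ℕ} (I : Ideal (MvPolynomial (Fin (n + 1)) ℂ))

lemma hilb_eq_card (k : ℕ) : hilb n I k = (Nk I k).card := by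
  have hli := linearIndependent_Nk I k
  have hsp : Submodule.span ℂ (Set.range fun d : {x // x ∈ Nk I k} =>
      Ideal.Quotient.mkₐ ℂ I (monomial d.1 1 : MvPolynomial (Fin (n + 1)) ℂ)) =
      Submodule.map (Ideal.Quotient.mkₐ ℂ I).toLinearMap
        (homogeneousSubmodule (Fin (n + 1)) ℂ k) := by
    apply le_antisymm
    · rw [Submodule.span_le]
      rintro _ ⟨d, rfl⟩
      exact ⟨monomial d.1 1,
        (mem_homogeneousSubmodule _ _).mpr (isHomogeneous_monomial 1 ((mem_Nk I).mp d.2).1),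
        rfl⟩
    · rintro q hq
      obtain ⟨f, hf, rfl⟩ := hq
      exact mk_mem_span I k f ((mem_homogeneousSubmodule _ _).mp hf)
  unfold hilb
  rw [← hsp, finrank_span_eq_card hli, Fintype.card_coe]

lemma hilb_step1 {k : ℕ} (h : hilb n I k ≤ k) : hilb n I (k + 1) ≤ hilb n I k := by
  rw [hilb_eq_card] at h ⊢
  rw [hilb_eq_card]
  exact card_Nk_succ_le I h

lemma hilb_step2 {k : ℕ} (hk : 1 ≤ k) (h : hilb n I k ≤ 2 * k) :
    hilb n I (k + 1) ≤ hilb n I k + 1 := by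
  rw [hilb_eq_card] at h ⊢
  rw [hilb_eq_card]
  exact card_Nk_succ_le' I hk h

lemma descend {d : ℕ} {P : ℕ → Prop} (base : P d)
    (step : ∀ j, j + 1 ≤ d → P (j + 1) → P j) : ∀ k, k ≤ d → P k := by
  have h : ∀ i, i ≤ d → P (d - i) := by
    intro i
    induction i with
    | zero => intro _; simpa using base
    | succ m IH =>
      intro hm
      have h1 : d - (m + 1) + 1 = d - m := by omega
      exact step (d - (m + 1)) (by omega) (by rw [h1]; exact IH (by omega))
  intro k hk
  have := h (d - k) (by omega)
  rwa [Nat.sub_sub_self hk] at this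

end HilbAux

/-- Lower bounds for the Hilbert function below degree `d` in terms of `h = h_I(d)`. -/
theorem hilb_lower_bounds (n : ℕ) (I : Ideal (MvPolynomial (Fin (n + 1)) ℂ))
    (hhom : ∀ f ∈ I, ∀ k : ℕ, homogeneousComponent k f ∈ I)
    (d : ℕ) (hd : 2 ≤ d) (k : ℕ) (hk : k ≤ d) :
    (hilb n I d ≤ d → min (hilb n I d) (k + 1) ≤ hilb n I k) ∧
    (d + 1 ≤ hilb n I d → hilb n I d ≤ 2 * d →
      min (k + (hilb n I d - d)) (2 * k + 1) ≤ hilb n I k) ∧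
    (hilb n I d = 2 * d + 1 → 2 * k + 1 ≤ hilb n I k) := by
  refine ⟨?_, ?_, ?_⟩
  · intro hH
    refine HilbAux.descend (d := d) (P := fun j => min (hilb n I d) (j + 1) ≤ hilb n I j)
      ?_ ?_ k hk
    · omega
    · intro j hj hP
      by_contra hcon
      push_neg at hcon
      have h1 : hilb n I j ≤ j := by omega
      have h2 := HilbAux.hilb_step1 I h1
      omega
  · intro hH1 hH2
    refine HilbAux.descend (d := d)
      (P := fun j => min (j + (hilb n I d - d)) (2 * j + 1) ≤ hilb n I j) ?_ ?_ k hk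
    · omega
    · intro j hj hP
      by_contra hcon
      push_neg at hcon
      by_cases h1 : hilb n I j ≤ j
      · have h2 := HilbAux.hilb_step1 I h1
        omega
      · have hk1 : 1 ≤ j := by omega
        have h2 := HilbAux.hilb_step2 I hk1 (by omega)
        omega
  · intro hH
    refine HilbAux.descend (d := d) (P := fun j => 2 * j + 1 ≤ hilb n I j) ?_ ?_ k hk
    · omega
    · intro j hj hP
      by_contra hcon
      push_neg at hcon
      by_cases h1 : hilb n I j ≤ j
      · have h2 := HilbAux.hilb_step1 I h1
        omega
      · have hk1 : 1 ≤ j := by omega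
        have h2 := HilbAux.hilb_step2 I hk1 (by omega)
        omega
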